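/- Let $q \ge 1$ and $r$ with $0 < r \le q$, and let $A(x) = a(x)I + x^r J(x) \in \mathcal{M}_2(\mathbb{R}[x])$, where $a(x)$ is a polynomial of degree $\le r-1$ and $J(x) = J_0 + xJ_1 + \cdots + x^{q-r}J_{q-r}$ with $J_0 = \begin{pmatrix}\mathfrak{a} & -\mathfrak{b} \\ \mathfrak{b} & \mathfrak{a}\end{pmatrix}$, $\mathfrak{b} \neq 0$. Then there exist matrices $T_1,\dots,T_q \in \mathcal{M}_2(\mathbb{R})$ such that, setting $T(x) = I + xT_1 + \cdots + x^q T_q$, there are $D(x) = a(x)I + x^r N(x)$ with $N(x) = N_0 + \cdots + x^{q-r}N_{q-r}$, each $N_j$ of the form $\begin{pmatrix}\mathfrak{a}_j & -\mathfrak{b}_j \\ \mathfrak{b}_j & \mathfrak{a}_j\end{pmatrix}$ and $N_0 = J_0$, and $E \in \mathcal{M}_2(\mathbb{R}[x])$ of degree $\le q$, satisfying $A(x)T(x) - T(x)D(x) - x^{q+1}T'(x) = x^{q+1}E(x)$. -/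

import Mathlib

open Polynomial Finset

private abbrev M2 := Matrix (Fin 2) (Fin 2) ℝ
private abbrev MP2 := Matrix (Fin 2) (Fin 2) (Polynomial ℝ)

private noncomputable def circ (p : ℝ × ℝ) : M2 := !![p.1, -p.2; p.2, p.1]

private lemma key_alg (𝕓 : ℝ) (hb : 𝕓 ≠ 0) (𝕒 : ℝ) (W : M2) :
    let Nn : ℝ × ℝ := ((W 0 0 + W 1 1)/2, (W 1 0 - W 0 1)/2)
    let Tn : M2 := !![0, (W 0 0 - W 1 1)/(2*𝕓); 0, (W 0 1 + W 1 0)/(2*𝕓)]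
    (!![𝕒, -𝕓; 𝕓, 𝕒] * Tn - Tn * circ (𝕒, 𝕓)) + (W - circ Nn) = 0 := by
  intro Nn Tn
  show (!![𝕒, -𝕓; 𝕓, 𝕒] * Tn - Tn * circ (𝕒, 𝕓)) + (W - circ Nn) = 0
  ext i j
  fin_cases i <;> fin_cases j <;>
    simp [Tn, Nn, circ, Matrix.mul_apply, Fin.sum_univ_two, Matrix.add_apply,
      Matrix.sub_apply] <;> field_simp <;> ring

private lemma exists_seq (𝕒 𝕓 : ℝ) (hb : 𝕓 ≠ 0) (Jc : ℕ → M2)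
    (hJ0 : Jc 0 = !![𝕒, -𝕓; 𝕓, 𝕒]) (m : ℕ) :
    ∃ (Tc : ℕ → M2) (Nc : ℕ → ℝ × ℝ), Tc 0 = 1 ∧ Nc 0 = (𝕒, 𝕓) ∧
      ∀ k ≤ m, ∑ p ∈ Finset.HasAntidiagonal.antidiagonal k,
        (Jc p.1 * Tc p.2 - Tc p.2 * circ (Nc p.1)) = 0 := by
  induction m with
  | zero =>
    refine ⟨fun _ => 1, fun _ => (𝕒, 𝕓), rfl, rfl, ?_⟩
    intro k hk
    interval_cases k
    simp [hJ0, circ]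
  | succ m ih =>
    obtain ⟨Tc, Nc, hT0, hN0, hcon⟩ := ih
    set K := m + 1 with hK
    set S : M2 := ∑ p ∈ ((Finset.HasAntidiagonal.antidiagonal K).erase (0, K)).erase (K, 0),
        (Jc p.1 * Tc p.2 - Tc p.2 * circ (Nc p.1)) with hS
    set W : M2 := Jc K + S with hW
    set Nn : ℝ × ℝ := ((W 0 0 + W 1 1)/2, (W 1 0 - W 0 1)/2) with hNn
    set Tn : M2 := !![0, (W 0 0 - W 1 1)/(2*𝕓); 0, (W 0 1 + W 1 0)/(2*𝕓)] with hTn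
    refine ⟨Function.update Tc K Tn, Function.update Nc K Nn, ?_, ?_, ?_⟩
    · rw [Function.update_of_ne (by omega), hT0]
    · rw [Function.update_of_ne (by omega), hN0]
    intro k hk
    rcases Nat.lt_or_ge k K with hlt | hge
    · have : ∑ p ∈ Finset.HasAntidiagonal.antidiagonal k,
          (Jc p.1 * Function.update Tc K Tn p.2 -
            Function.update Tc K Tn p.2 * circ (Function.update Nc K Nn p.1))
          = ∑ p ∈ Finset.HasAntidiagonal.antidiagonal k, (Jc p.1 * Tc p.2 - Tc p.2 * circ (Nc p.1)) := by
        refine Finset.sum_congr rfl ?_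
        intro p hp
        rw [Finset.HasAntidiagonal.mem_antidiagonal] at hp
        rw [Function.update_of_ne (by omega), Function.update_of_ne (by omega)]
      rw [this]
      exact hcon k (by omega)
    · have hkK : k = K := by omega
      subst hkK
      have h1 : (0, K) ∈ Finset.HasAntidiagonal.antidiagonal K := by simp
      have h2 : (K, 0) ∈ (Finset.HasAntidiagonal.antidiagonal K).erase (0, K) := by
        refine Finset.mem_erase.mpr ⟨?_, ?_⟩
        · simp only [ne_eq, Prod.mk.injEq, not_and]
          intro h
          omega
        · simp
      rw [← Finset.add_sum_erase _ _ h1, ← Finset.add_sum_erase _ _ h2]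
      have hS' : ∑ p ∈ ((Finset.HasAntidiagonal.antidiagonal K).erase (0, K)).erase (K, 0),
          (Jc p.1 * Function.update Tc K Tn p.2 -
            Function.update Tc K Tn p.2 * circ (Function.update Nc K Nn p.1)) = S := by
        rw [hS]
        refine Finset.sum_congr rfl ?_
        intro p hp
        simp only [Finset.mem_erase, Finset.HasAntidiagonal.mem_antidiagonal] at hp
        obtain ⟨hp1, hp2, hp3⟩ := hp
        have : p.1 ≠ K ∧ p.2 ≠ K := by
          constructor
          · intro h; apply hp1; ext <;> simp <;> omega
          · intro h; apply hp2; ext <;> simp <;> omega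
        rw [Function.update_of_ne this.1, Function.update_of_ne this.2]
      rw [hS']
      simp only [Function.update_self, Function.update_of_ne (show (0:ℕ) ≠ K by omega),
        Function.update_of_ne (show K ≠ (0:ℕ) by omega), hT0, hN0, hJ0]
      have := key_alg 𝕓 hb 𝕒 W
      simp only at this
      rw [Matrix.mul_one, Matrix.one_mul]
      calc !![𝕒, -𝕓; 𝕓, 𝕒] * Tn - Tn * circ (𝕒, 𝕓) + (Jc K - circ Nn + S)
          = (!![𝕒, -𝕓; 𝕓, 𝕒] * Tn - Tn * circ (𝕒, 𝕓)) + (W - circ Nn) := by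
            rw [hW]; abel
        _ = 0 := this

private lemma coeff_msum (F : ℕ → M2) (d u : ℕ) (i l : Fin 2) :
    ((∑ j ∈ Finset.range (d+1), (X ^ j : ℝ[X]) • (F j).map Polynomial.C) i l).coeff u
      = if u ≤ d then F u i l else 0 := by
  rw [Matrix.sum_apply]
  have h1 : ∀ j, ((X ^ j : ℝ[X]) • (F j).map Polynomial.C) i l
      = Polynomial.monomial j (F j i l) := by
    intro j
    simp only [Matrix.smul_apply, Matrix.map_apply, smul_eq_mul,
      ← Polynomial.C_mul_X_pow_eq_monomial]
    ring
  simp only [h1, Polynomial.finset_sum_coeff, Polynomial.coeff_monomial]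
  rw [Finset.sum_ite_eq']
  simp [Nat.lt_succ_iff]

private lemma coeff_mmul (P Q : MP2) (s : ℕ) (i l : Fin 2) :
    ((P * Q) i l).coeff s
      = ∑ p ∈ Finset.HasAntidiagonal.antidiagonal s, ∑ k, (P i k).coeff p.1 * (Q k l).coeff p.2 := by
  rw [Matrix.mul_apply, Polynomial.finset_sum_coeff]
  simp_rw [Polynomial.coeff_mul]
  exact Finset.sum_comm

theorem stmt8 (q r : ℕ) (hq : 1 ≤ q) (hr : 0 < r) (hrq : r ≤ q)
    (a : Polynomial ℝ) (ha : a.degree < r)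
    (𝕒 𝕓 : ℝ) (hb : 𝕓 ≠ 0)
    (Jc : ℕ → Matrix (Fin 2) (Fin 2) ℝ) (hJ0 : Jc 0 = !![𝕒, -𝕓; 𝕓, 𝕒]) :
    let C2 : Matrix (Fin 2) (Fin 2) ℝ → Matrix (Fin 2) (Fin 2) (Polynomial ℝ) :=
      fun M => M.map Polynomial.C
    let Jpoly : Matrix (Fin 2) (Fin 2) (Polynomial ℝ) :=
      ∑ j ∈ Finset.range (q - r + 1), (Polynomial.X ^ j : Polynomial ℝ) • C2 (Jc j)
    let A : Matrix (Fin 2) (Fin 2) (Polynomial ℝ) :=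
      a • 1 + (Polynomial.X ^ r : Polynomial ℝ) • Jpoly
    ∃ (Tc : ℕ → Matrix (Fin 2) (Fin 2) ℝ) (Nc : ℕ → ℝ × ℝ)
      (E : Matrix (Fin 2) (Fin 2) (Polynomial ℝ)),
      Nc 0 = (𝕒, 𝕓) ∧
      (∀ i j, (E i j).natDegree ≤ q) ∧
      (let T : Matrix (Fin 2) (Fin 2) (Polynomial ℝ) :=
          1 + ∑ j ∈ Finset.Icc 1 q, (Polynomial.X ^ j : Polynomial ℝ) • C2 (Tc j)
       let N : Matrix (Fin 2) (Fin 2) (Polynomial ℝ) :=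
          ∑ j ∈ Finset.range (q - r + 1), (Polynomial.X ^ j : Polynomial ℝ) •
            C2 !![(Nc j).1, -(Nc j).2; (Nc j).2, (Nc j).1]
       let D : Matrix (Fin 2) (Fin 2) (Polynomial ℝ) :=
          a • 1 + (Polynomial.X ^ r : Polynomial ℝ) • N
       A * T - T * D - (Polynomial.X ^ (q + 1) : Polynomial ℝ) •
          T.map (fun p => Polynomial.derivative p)
        = (Polynomial.X ^ (q + 1) : Polynomial ℝ) • E) := by
  intro C2 Jpoly A
  obtain ⟨Tc, Nc, hT0, hN0, hcon⟩ := exists_seq 𝕒 𝕓 hb Jc hJ0 (q - r)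
  have hA : A = a • 1 + (X ^ r : ℝ[X]) • Jpoly := rfl
  have hJp : Jpoly = ∑ j ∈ Finset.range (q - r + 1), (X ^ j : ℝ[X]) • (Jc j).map C := rfl
  set Tm : MP2 := 1 + ∑ j ∈ Finset.Icc 1 q, (X ^ j : ℝ[X]) • (Tc j).map C with hTm
  set Nm : MP2 := ∑ j ∈ Finset.range (q - r + 1), (X ^ j : ℝ[X]) • (circ (Nc j)).map C
    with hNm
  set Dm : MP2 := a • 1 + (X ^ r : ℝ[X]) • Nm with hDm
  set Lm : MP2 := A * Tm - Tm * Dm -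
    (X ^ (q + 1) : ℝ[X]) • Tm.map (fun p => Polynomial.derivative p) with hLm
  clear_value Jpoly A Tm Nm Dm Lm
  -- T as a single sum
  have hTsum : Tm = ∑ j ∈ Finset.range (q+1), (X ^ j : ℝ[X]) • (Tc j).map C := by
    rw [hTm]
    have hins : Finset.range (q+1) = insert 0 (Finset.Icc 1 q) := by
      ext x; simp [Finset.mem_range, Finset.mem_Icc]; omega
    rw [hins, Finset.sum_insert (by simp)]
    congr 1
    rw [hT0, pow_zero, one_smul]
    exact (Matrix.map_one _ (map_zero C) (map_one C)).symm
  -- coefficient extraction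
  have hTco : ∀ u, u ≤ q → ∀ i l, (Tm i l).coeff u = Tc u i l := by
    intro u hu i l
    rw [hTsum, coeff_msum, if_pos hu]
  have hJco : ∀ u, u ≤ q - r → ∀ i l, (Jpoly i l).coeff u = Jc u i l := by
    intro u hu i l
    rw [hJp, coeff_msum, if_pos hu]
  have hNco : ∀ u, u ≤ q - r → ∀ i l, (Nm i l).coeff u = circ (Nc u) i l := by
    intro u hu i l
    rw [hNm, coeff_msum, if_pos hu]
  -- the algebraic reduction
  have hsub : A * Tm - Tm * Dm = (X ^ r : ℝ[X]) • (Jpoly * Tm - Tm * Nm) := by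
    rw [hA, hDm, Matrix.add_mul, Matrix.mul_add, Matrix.smul_mul, Matrix.smul_mul,
      Matrix.mul_smul, Matrix.mul_smul, Matrix.one_mul, Matrix.mul_one, smul_sub]
    abel
  -- vanishing of low coefficients
  have hvan : ∀ d, d ≤ q - r → ∀ i l, ((Jpoly * Tm - Tm * Nm) i l).coeff d = 0 := by
    intro d hd i l
    have e1 : ((Jpoly * Tm) i l).coeff d
        = (∑ p ∈ Finset.HasAntidiagonal.antidiagonal d, Jc p.1 * Tc p.2) i l := by
      rw [coeff_mmul, Matrix.sum_apply]
      refine Finset.sum_congr rfl ?_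
      intro p hp
      rw [Finset.HasAntidiagonal.mem_antidiagonal] at hp
      rw [Matrix.mul_apply]
      refine Finset.sum_congr rfl ?_
      intro k _
      rw [hJco p.1 (by omega), hTco p.2 (by omega)]
    have e2 : ((Tm * Nm) i l).coeff d
        = (∑ p ∈ Finset.HasAntidiagonal.antidiagonal d, Tc p.1 * circ (Nc p.2)) i l := by
      rw [coeff_mmul, Matrix.sum_apply]
      refine Finset.sum_congr rfl ?_
      intro p hp
      rw [Finset.HasAntidiagonal.mem_antidiagonal] at hp
      rw [Matrix.mul_apply]
      refine Finset.sum_congr rfl ?_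
      intro k _
      rw [hTco p.1 (by omega), hNco p.2 (by omega)]
    have e3 : (∑ p ∈ Finset.HasAntidiagonal.antidiagonal d, Tc p.1 * circ (Nc p.2))
        = ∑ p ∈ Finset.HasAntidiagonal.antidiagonal d, Tc p.2 * circ (Nc p.1) := by
      conv_rhs => rw [← Finset.HasAntidiagonal.map_swap_antidiagonal, Finset.sum_map]
      refine Finset.sum_congr rfl ?_
      intro p _
      rfl
    rw [Matrix.sub_apply, Polynomial.coeff_sub, e1, e2, e3, ← Matrix.sub_apply,
      ← Finset.sum_sub_distrib, hcon d hd]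
    simp
  -- divisibility
  have hdvd : ∀ i l, (X : ℝ[X]) ^ (q + 1) ∣ Lm i l := by
    intro i l
    rw [Polynomial.X_pow_dvd_iff]
    intro k hk
    have hL' : Lm i l = X ^ r * ((Jpoly * Tm - Tm * Nm) i l)
        - X ^ (q+1) * Polynomial.derivative (Tm i l) := by
      rw [hLm, hsub, Matrix.sub_apply, Matrix.smul_apply, smul_eq_mul,
        Matrix.smul_apply, Matrix.map_apply, smul_eq_mul]
    rw [hL', Polynomial.coeff_sub]
    have h3 : ((X : ℝ[X]) ^ (q+1) * Polynomial.derivative (Tm i l)).coeff k = 0 :=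
      Polynomial.X_pow_dvd_iff.mp (dvd_mul_right _ _) k hk
    rw [h3, sub_zero]
    rcases Nat.lt_or_ge k r with hkr | hkr
    · exact Polynomial.X_pow_dvd_iff.mp (dvd_mul_right _ _) k hkr
    · have hkd : k = (k - r) + r := by omega
      rw [hkd, Polynomial.coeff_X_pow_mul]
      exact hvan (k - r) (by omega) i l
  set E : MP2 := Matrix.of (fun i l => (hdvd i l).choose) with hE
  have hEspec : ∀ i l, Lm i l = X ^ (q+1) * E i l := fun i l => (hdvd i l).choose_spec
  -- degree bounds
  have hnda : a.natDegree ≤ q := by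
    rw [Polynomial.natDegree_le_iff_degree_le]
    calc a.degree ≤ (r : WithBot ℕ) := le_of_lt ha
      _ ≤ (q : WithBot ℕ) := by exact_mod_cast hrq
  have hsc : ∀ (p : ℝ[X]) (i l : Fin 2), ((p • (1 : MP2)) i l).natDegree ≤ p.natDegree := by
    intro p i l
    rw [Matrix.smul_apply, Matrix.one_apply]
    split
    · simp
    · simp
  have hmsum : ∀ (F : ℕ → M2) (d : ℕ) (i l : Fin 2),
      ((∑ j ∈ Finset.range (d+1), (X ^ j : ℝ[X]) • (F j).map C) i l).natDegree ≤ d := by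
    intro F d i l
    rw [Matrix.sum_apply]
    refine Polynomial.natDegree_sum_le_of_forall_le _ _ ?_
    intro j hj
    rw [Finset.mem_range] at hj
    rw [Matrix.smul_apply, Matrix.map_apply, smul_eq_mul]
    calc ((X:ℝ[X]) ^ j * C (F j i l)).natDegree
        ≤ ((X:ℝ[X]) ^ j).natDegree + (C (F j i l)).natDegree := Polynomial.natDegree_mul_le
      _ ≤ j + 0 := by
          gcongr
          · exact le_of_eq (Polynomial.natDegree_X_pow j)
          · exact le_of_eq (Polynomial.natDegree_C _)
      _ ≤ d := by omega
  have hTdeg : ∀ i l, (Tm i l).natDegree ≤ q := by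
    intro i l
    rw [hTsum]
    exact hmsum Tc q i l
  have hAdeg : ∀ i l, (A i l).natDegree ≤ q := by
    intro i l
    rw [hA, Matrix.add_apply]
    refine le_trans (Polynomial.natDegree_add_le _ _) (max_le (le_trans (hsc a i l) hnda) ?_)
    rw [Matrix.smul_apply, smul_eq_mul]
    calc ((X:ℝ[X]) ^ r * Jpoly i l).natDegree
        ≤ r + (Jpoly i l).natDegree := by
          refine le_trans Polynomial.natDegree_mul_le ?_
          gcongr
          exact le_of_eq (Polynomial.natDegree_X_pow r)
      _ ≤ r + (q - r) := by
          gcongr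
          rw [hJp]
          exact hmsum Jc (q - r) i l
      _ ≤ q := by omega
  have hDdeg : ∀ i l, (Dm i l).natDegree ≤ q := by
    intro i l
    rw [hDm, Matrix.add_apply]
    refine le_trans (Polynomial.natDegree_add_le _ _) (max_le (le_trans (hsc a i l) hnda) ?_)
    rw [Matrix.smul_apply, smul_eq_mul]
    calc ((X:ℝ[X]) ^ r * Nm i l).natDegree
        ≤ r + (Nm i l).natDegree := by
          refine le_trans Polynomial.natDegree_mul_le ?_
          gcongr
          exact le_of_eq (Polynomial.natDegree_X_pow r)
      _ ≤ r + (q - r) := by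
          gcongr
          rw [hNm]
          exact hmsum _ (q - r) i l
      _ ≤ q := by omega
  have hmulq : ∀ (P Q : MP2), (∀ i l, (P i l).natDegree ≤ q) →
      (∀ i l, (Q i l).natDegree ≤ q) → ∀ i l, ((P * Q) i l).natDegree ≤ 2*q := by
    intro P Q hP hQ i l
    rw [Matrix.mul_apply]
    refine Polynomial.natDegree_sum_le_of_forall_le _ _ ?_
    intro k _
    calc (P i k * Q k l).natDegree ≤ (P i k).natDegree + (Q k l).natDegree :=
        Polynomial.natDegree_mul_le
      _ ≤ 2*q := by have := hP i k; have := hQ k l; omega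
  have hLdeg : ∀ i l, (Lm i l).natDegree ≤ 2*q + 1 := by
    intro i l
    rw [hLm, Matrix.sub_apply, Matrix.sub_apply]
    refine le_trans (Polynomial.natDegree_sub_le _ _) (max_le
      (le_trans (Polynomial.natDegree_sub_le _ _) (max_le ?_ ?_)) ?_)
    · exact le_trans (hmulq A Tm hAdeg hTdeg i l) (by omega)
    · exact le_trans (hmulq Tm Dm hTdeg hDdeg i l) (by omega)
    · rw [Matrix.smul_apply, Matrix.map_apply, smul_eq_mul]
      calc ((X:ℝ[X]) ^ (q+1) * Polynomial.derivative (Tm i l)).natDegree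
          ≤ (q+1) + (Polynomial.derivative (Tm i l)).natDegree := by
            refine le_trans Polynomial.natDegree_mul_le ?_
            gcongr
            exact le_of_eq (Polynomial.natDegree_X_pow _)
        _ ≤ (q+1) + q := by
            gcongr
            exact le_trans (Polynomial.natDegree_derivative_le _)
              (le_trans (Nat.sub_le _ _) (hTdeg i l))
        _ ≤ 2*q + 1 := by omega
  have hEdeg : ∀ i l, (E i l).natDegree ≤ q := by
    intro i l
    by_cases h0 : E i l = 0
    · rw [h0]; simp
    · have hXne : (X : ℝ[X]) ^ (q+1) ≠ 0 := pow_ne_zero _ Polynomial.X_ne_zero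
      have := hEspec i l
      have hnd : (Lm i l).natDegree = (q+1) + (E i l).natDegree := by
        rw [this, Polynomial.natDegree_mul hXne h0, Polynomial.natDegree_X_pow]
      have := hLdeg i l
      omega
  have hfinal : Lm = (X ^ (q+1) : ℝ[X]) • E := by
    ext i l
    rw [Matrix.smul_apply, smul_eq_mul, ← hEspec i l]
  refine ⟨Tc, Nc, E, hN0, hEdeg, ?_⟩
  intro T N D
  have eT : T = Tm := by rw [hTm]
  have eN : N = Nm := by rw [hNm]; rfl
  have eD : D = Dm := by rw [hDm, ← eN]
  rw [eT, eD, ← hLm]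
  exact hfinal
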